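/- For 0 < q < 1 and complex z, the identity Σ_{n=0}^∞ q^{n²} z^n / ((q;q)_n (qz;q)_n) = 1/(qz;q)_∞ holds (both sides convergent for |z| < 1/q, z avoiding poles), where (qz;q)_∞ = ∏_{k=0}^∞ (1 - z q^{k+1}). -/

import Mathlib

/-- `(a;q)ₙ = ∏_{j=0}^{n-1} (1 - a qʲ)`. -/
def qPoch (a q : ℂ) (n : ℕ) : ℂ := ∏ j ∈ Finset.range n, (1 - a * q ^ j)

open Finset Filter Topology

lemma qPoch_zero (a q : ℂ) : qPoch a q 0 = 1 := by simp [qPoch]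

lemma qPoch_succ (a q : ℂ) (n : ℕ) : qPoch a q (n+1) = qPoch a q n * (1 - a * q ^ n) := by
  simp [qPoch, Finset.prod_range_succ]

lemma qPoch_add (a q : ℂ) (m n : ℕ) :
    qPoch a q (m+n) = qPoch a q m * qPoch (a * q ^ m) q n := by
  simp only [qPoch, Finset.prod_range_add]
  congr 1
  refine Finset.prod_congr rfl fun j _ => ?_
  rw [pow_add]; ring

lemma one_sub_q_mul_pow_ne (q : ℝ) (hq0 : 0 < q) (hq1 : q < 1) (j : ℕ) :
    (1:ℂ) - (q:ℂ) * (q:ℂ)^j ≠ 0 := by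
  have hlt : q * q^j < 1 := by
    have h := pow_lt_one₀ (le_of_lt hq0) hq1 (Nat.succ_ne_zero j)
    calc q * q^j = q^(j+1) := by rw [pow_succ]; ring
    _ < 1 := h
  have hcast : (1:ℂ) - (q:ℂ) * (q:ℂ)^j = ((1 - q*q^j : ℝ) : ℂ) := by push_cast; ring
  rw [hcast, Complex.ofReal_ne_zero]
  have : 0 < 1 - q*q^j := by linarith
  exact ne_of_gt this

lemma qq_ne_zero (q : ℝ) (hq0 : 0 < q) (hq1 : q < 1) (n : ℕ) :
    qPoch (q:ℂ) (q:ℂ) n ≠ 0 := by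
  unfold qPoch
  rw [Finset.prod_ne_zero_iff]
  exact fun j _ => one_sub_q_mul_pow_ne q hq0 hq1 j

noncomputable def Bq (q : ℝ) (N n : ℕ) : ℂ :=
  qPoch (q:ℂ) (q:ℂ) N / (qPoch (q:ℂ) (q:ℂ) n * qPoch (q:ℂ) (q:ℂ) (N-n))

lemma pascal_term (q : ℝ) (hq0 : 0 < q) (hq1 : q < 1) (z : ℂ) (m k : ℕ) :
    Bq q (m+1+k+1) (m+1) * (q:ℂ)^((m+1)^2) * z^(m+1) *
        qPoch (z * (q:ℂ)^(m+1+1)) (q:ℂ) (k+1)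
      = (1 - z * (q:ℂ)^(m+1+k+1)) *
          (Bq q (m+1+k) (m+1) * (q:ℂ)^((m+1)^2) * z^(m+1) *
            qPoch (z * (q:ℂ)^(m+1+1)) (q:ℂ) k)
        + z * (q:ℂ)^(m+1+k+1) *
          (Bq q (m+1+k) m * (q:ℂ)^(m^2) * (z*(q:ℂ))^m *
            qPoch ((z*(q:ℂ)) * (q:ℂ)^(m+1)) (q:ℂ) (k+1)) := by
  have harg : (z*(q:ℂ)) * (q:ℂ)^(m+1) = z * (q:ℂ)^(m+1+1) := by rw [pow_succ, pow_succ]; ring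
  rw [harg]
  unfold Bq
  rw [show m+1+k+1-(m+1) = k+1 from by omega, show m+1+k-(m+1) = k from by omega,
      show m+1+k-m = k+1 from by omega]
  simp only [qPoch_succ]
  have e2 : (m+1)^2 = m^2 + (m+m+1) := by ring
  rw [e2, pow_add]
  have hPm := qq_ne_zero q hq0 hq1 m
  have hPk := qq_ne_zero q hq0 hq1 k
  have h1m := one_sub_q_mul_pow_ne q hq0 hq1 m
  have h1k := one_sub_q_mul_pow_ne q hq0 hq1 k
  field_simp
  ring

lemma Bq_zero (q : ℝ) (hq0 : 0 < q) (hq1 : q < 1) (M : ℕ) : Bq q M 0 = 1 := by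
  unfold Bq
  rw [Nat.sub_zero, qPoch_zero, one_mul, div_self (qq_ne_zero q hq0 hq1 M)]

lemma Bq_self (q : ℝ) (hq0 : 0 < q) (hq1 : q < 1) (M : ℕ) : Bq q M M = 1 := by
  unfold Bq
  rw [Nat.sub_self, qPoch_zero, mul_one, div_self (qq_ne_zero q hq0 hq1 M)]

lemma key (q : ℝ) (hq0 : 0 < q) (hq1 : q < 1) (N : ℕ) :
    ∀ z : ℂ, ∑ n ∈ Finset.range (N+1),
        Bq q N n * (q:ℂ)^(n^2) * z^n * qPoch (z * (q:ℂ)^(n+1)) (q:ℂ) (N-n) = 1 := by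
  induction N with
  | zero =>
      intro z
      simp [Bq, qPoch]
  | succ N IH =>
      intro z
      rw [Finset.sum_range_succ', Finset.sum_range_succ]
      have hmid : ∀ i ∈ Finset.range N,
          Bq q (N+1) (i+1) * (q:ℂ)^((i+1)^2) * z^(i+1) *
              qPoch (z * (q:ℂ)^(i+1+1)) (q:ℂ) (N+1-(i+1))
            = (1 - z * (q:ℂ)^(N+1)) *
                (Bq q N (i+1) * (q:ℂ)^((i+1)^2) * z^(i+1) *
                  qPoch (z * (q:ℂ)^(i+1+1)) (q:ℂ) (N-(i+1)))
              + z * (q:ℂ)^(N+1) *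
                (Bq q N i * (q:ℂ)^(i^2) * (z*(q:ℂ))^i *
                  qPoch ((z*(q:ℂ)) * (q:ℂ)^(i+1)) (q:ℂ) (N-i)) := by
        intro i hi
        rw [Finset.mem_range] at hi
        obtain ⟨k, rfl⟩ : ∃ k, N = i+1+k := ⟨N-i-1, by omega⟩
        rw [show i+1+k+1-(i+1) = k+1 from by omega, show i+1+k-(i+1) = k from by omega,
            show i+1+k-i = k+1 from by omega]
        exact pascal_term q hq0 hq1 z i k
      rw [Finset.sum_congr rfl hmid]
      have hT0 : Bq q (N+1) 0 * (q:ℂ)^(0^2) * z^0 * qPoch (z * (q:ℂ)^(0+1)) (q:ℂ) (N+1-0)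
          = (1 - z * (q:ℂ)^(N+1)) *
              (Bq q N 0 * (q:ℂ)^(0^2) * z^0 * qPoch (z * (q:ℂ)^(0+1)) (q:ℂ) (N-0)) := by
        rw [Bq_zero q hq0 hq1, Bq_zero q hq0 hq1, Nat.sub_zero, Nat.sub_zero, qPoch_succ]
        ring
      have hTN : Bq q (N+1) (N+1) * (q:ℂ)^((N+1)^2) * z^(N+1) *
              qPoch (z * (q:ℂ)^(N+1+1)) (q:ℂ) (N+1-(N+1))
          = z * (q:ℂ)^(N+1) *
              (Bq q N N * (q:ℂ)^(N^2) * (z*(q:ℂ))^N *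
                qPoch ((z*(q:ℂ)) * (q:ℂ)^(N+1)) (q:ℂ) (N-N)) := by
        rw [Bq_self q hq0 hq1, Bq_self q hq0 hq1, Nat.sub_self, Nat.sub_self,
            qPoch_zero, qPoch_zero]
        have e2 : (N+1)^2 = N^2 + (N+N+1) := by ring
        rw [e2, pow_add]
        ring
      rw [hT0, hTN]
      rw [Finset.sum_add_distrib, ← Finset.mul_sum, ← Finset.mul_sum]
      have IH1 := IH z
      have IH2 := IH (z*(q:ℂ))
      rw [Finset.sum_range_succ'] at IH1
      rw [Finset.sum_range_succ] at IH2
      linear_combination (1 - z*(q:ℂ)^(N+1)) * IH1 + z*(q:ℂ)^(N+1) * IH2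

-- nonvanishing of (qz;q)_n
lemma qz_ne_zero (q : ℝ) (z : ℂ) (hpole : ∀ k : ℕ, 1 - z * (q : ℂ) ^ (k + 1) ≠ 0) (n : ℕ) :
    qPoch ((q:ℂ)*z) (q:ℂ) n ≠ 0 := by
  unfold qPoch
  rw [Finset.prod_ne_zero_iff]
  intro j _
  have h := hpole j
  have : (1:ℂ) - (q:ℂ)*z*(q:ℂ)^j = 1 - z*(q:ℂ)^(j+1) := by rw [pow_succ]; ring
  rw [this]; exact h

lemma AP (q : ℝ) (hq0 : 0 < q) (hq1 : q < 1) (z : ℂ)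
    (hpole : ∀ k : ℕ, 1 - z * (q : ℂ) ^ (k + 1) ≠ 0) (N : ℕ) :
    (∑ n ∈ Finset.range (N+1),
        Bq q N n * (q:ℂ)^(n^2) * z^n / qPoch ((q:ℂ)*z) (q:ℂ) n) *
      qPoch ((q:ℂ)*z) (q:ℂ) N = 1 := by
  rw [Finset.sum_mul, ← key q hq0 hq1 N z]
  refine Finset.sum_congr rfl fun n hn => ?_
  rw [Finset.mem_range] at hn
  obtain ⟨k, rfl⟩ : ∃ k, N = n + k := ⟨N-n, by omega⟩
  rw [show n+k-n = k from by omega, qPoch_add ((q:ℂ)*z) (q:ℂ) n k]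
  have harg : (q:ℂ)*z * (q:ℂ)^n = z * (q:ℂ)^(n+1) := by rw [pow_succ]; ring
  rw [harg]
  have hPZ := qz_ne_zero q z hpole n
  field_simp

-- cast of (q;q)-type products to ℝ
lemma qq_cast (q : ℝ) (m n : ℕ) :
    qPoch ((q:ℂ)*(q:ℂ)^m) (q:ℂ) n = ((∏ j ∈ Finset.range n, (1 - q*q^m*q^j) : ℝ) : ℂ) := by
  unfold qPoch
  push_cast
  rfl

lemma norm_Bq_le (q : ℝ) (hq0 : 0 < q) (hq1 : q < 1) (N k : ℕ) (hk : k ≤ N) :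
    ‖Bq q N k‖ ≤ ((1-q)⁻¹)^k := by
  obtain ⟨j, rfl⟩ : ∃ j, N = j + k := ⟨N-k, by omega⟩
  have hPj := qq_ne_zero q hq0 hq1 j
  have heq : Bq q (j+k) k = qPoch ((q:ℂ)*(q:ℂ)^j) (q:ℂ) k / qPoch (q:ℂ) (q:ℂ) k := by
    unfold Bq
    rw [show j+k-k = j from by omega, qPoch_add (q:ℂ) (q:ℂ) j k]
    rw [mul_comm (qPoch (q:ℂ) (q:ℂ) k) (qPoch (q:ℂ) (q:ℂ) j),
        mul_div_mul_left _ _ hPj]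
  rw [heq, norm_div]
  have hnum : ‖qPoch ((q:ℂ)*(q:ℂ)^j) (q:ℂ) k‖ ≤ 1 := by
    rw [qq_cast, Complex.norm_real, Real.norm_eq_abs]
    have h1 : ∀ i ∈ Finset.range k, 0 ≤ 1 - q*q^j*q^i ∧ 1 - q*q^j*q^i ≤ 1 := by
      intro i _
      have h2 : q*q^j*q^i ≤ 1 := by
        have : q*q^j*q^i = q^(j+i+1) := by rw [pow_add, pow_add]; ring
        rw [this]
        exact le_of_lt (pow_lt_one₀ hq0.le hq1 (by omega))
      have h3 : 0 ≤ q*q^j*q^i := by positivity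
      constructor <;> linarith
    rw [abs_of_nonneg (Finset.prod_nonneg fun i hi => (h1 i hi).1)]
    calc ∏ i ∈ Finset.range k, (1 - q*q^j*q^i) ≤ ∏ i ∈ Finset.range k, 1 :=
          Finset.prod_le_prod (fun i hi => (h1 i hi).1) (fun i hi => (h1 i hi).2)
      _ = 1 := by simp
  have hden : ((1-q))^k ≤ ‖qPoch (q:ℂ) (q:ℂ) k‖ := by
    have : qPoch (q:ℂ) (q:ℂ) k = ((∏ j ∈ Finset.range k, (1 - q*1*q^j) : ℝ) : ℂ) := by
      have := qq_cast q 0 k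
      simpa using this
    rw [this, Complex.norm_real, Real.norm_eq_abs]
    have h1 : ∀ i ∈ Finset.range k, 1 - q ≤ 1 - q*1*q^i := by
      intro i _
      have : q*1*q^i ≤ q := by
        have : q*1*q^i = q^(i+1) := by rw [pow_add]; ring
        rw [this]
        calc q^(i+1) ≤ q^1 := pow_le_pow_of_le_one hq0.le hq1.le (by omega)
          _ = q := pow_one q
      linarith
    have h0 : ∀ i ∈ Finset.range k, (0:ℝ) ≤ 1 - q := fun i _ => by linarith
    calc (1-q)^k = ∏ i ∈ Finset.range k, (1-q) := by simp
      _ ≤ ∏ i ∈ Finset.range k, (1 - q*1*q^i) := Finset.prod_le_prod h0 h1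
      _ ≤ |∏ i ∈ Finset.range k, (1 - q*1*q^i)| := le_abs_self _
  have hd : (0:ℝ) < 1 - q := by linarith
  calc ‖qPoch ((q:ℂ)*(q:ℂ)^j) (q:ℂ) k‖ / ‖qPoch (q:ℂ) (q:ℂ) k‖
      ≤ 1 / (1-q)^k := by
        apply div_le_div₀ (by positivity) hnum (by positivity) hden
    _ = ((1-q)⁻¹)^k := by rw [one_div, inv_pow]

lemma norm_qz_ge (q : ℝ) (hq0 : 0 < q) (hq1 : q < 1) (z : ℂ) (hz : ‖z‖ * q < 1) (k : ℕ) :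
    (1 - q*‖z‖)^k ≤ ‖qPoch ((q:ℂ)*z) (q:ℂ) k‖ := by
  unfold qPoch
  rw [norm_prod]
  have hc : (0:ℝ) ≤ 1 - q*‖z‖ := by nlinarith [norm_nonneg z]
  calc (1 - q*‖z‖)^k = ∏ i ∈ Finset.range k, (1 - q*‖z‖) := by simp
    _ ≤ ∏ i ∈ Finset.range k, ‖1 - (q:ℂ)*z*(q:ℂ)^i‖ := by
        apply Finset.prod_le_prod (fun i _ => hc)
        intro i _
        have h1 : ‖(q:ℂ)*z*(q:ℂ)^i‖ = q * ‖z‖ * q^i := by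
          rw [norm_mul, norm_mul, norm_pow, Complex.norm_real, Real.norm_eq_abs,
              abs_of_pos hq0]
        have h2 : q * ‖z‖ * q^i ≤ q * ‖z‖ := by
          have hq : q^i ≤ 1 := pow_le_one₀ hq0.le hq1.le
          nlinarith [norm_nonneg z, mul_nonneg hq0.le (norm_nonneg z)]
        calc 1 - q*‖z‖ ≤ 1 - ‖(q:ℂ)*z*(q:ℂ)^i‖ := by rw [h1]; linarith
          _ ≤ ‖(1:ℂ) - (q:ℂ)*z*(q:ℂ)^i‖ := by
              have := norm_sub_norm_le (1:ℂ) ((q:ℂ)*z*(q:ℂ)^i)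
              simpa using this

lemma Bq_tendsto (q : ℝ) (hq0 : 0 < q) (hq1 : q < 1) (k : ℕ) :
    Tendsto (fun N => Bq q N k) atTop (𝓝 (1 / qPoch (q:ℂ) (q:ℂ) k)) := by
  have hcont : Continuous (fun a : ℂ => qPoch a (q:ℂ) k) := by
    unfold qPoch
    exact continuous_finset_prod _ (fun i _ => by continuity)
  have hq : ‖(q:ℂ)‖ < 1 := by
    rw [Complex.norm_real, Real.norm_eq_abs, abs_of_pos hq0]; exact hq1
  have h0 : Tendsto (fun N : ℕ => (q:ℂ)*(q:ℂ)^N) atTop (𝓝 0) := by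
    have := (tendsto_pow_atTop_nhds_zero_of_norm_lt_one hq).const_mul (q:ℂ)
    simpa using this
  have h1 : Tendsto (fun N : ℕ => qPoch ((q:ℂ)*(q:ℂ)^N) (q:ℂ) k) atTop (𝓝 1) := by
    have := (hcont.tendsto 0).comp h0
    have e : qPoch 0 (q:ℂ) k = 1 := by simp [qPoch]
    rw [e] at this
    exact this
  have h2 : Tendsto (fun N : ℕ => qPoch ((q:ℂ)*(q:ℂ)^(N-k)) (q:ℂ) k) atTop (𝓝 1) :=
    h1.comp (tendsto_sub_atTop_nat k)
  have h3 := h2.div_const (qPoch (q:ℂ) (q:ℂ) k)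
  apply h3.congr'
  filter_upwards [eventually_ge_atTop k] with N hN
  obtain ⟨j, rfl⟩ : ∃ j, N = j + k := ⟨N-k, by omega⟩
  have hPj := qq_ne_zero q hq0 hq1 j
  rw [show j+k-k = j from by omega]
  unfold Bq
  rw [show j+k-k = j from by omega]
  have : qPoch (q:ℂ) (q:ℂ) (j+k) = qPoch (q:ℂ) (q:ℂ) j * qPoch ((q:ℂ)*(q:ℂ)^j) (q:ℂ) k :=
    qPoch_add (q:ℂ) (q:ℂ) j k
  rw [this, mul_comm (qPoch (q:ℂ) (q:ℂ) k) (qPoch (q:ℂ) (q:ℂ) j), mul_div_mul_left _ _ hPj]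

lemma multipliable_fact (q : ℝ) (hq0 : 0 < q) (hq1 : q < 1) (z : ℂ)
    (hpole : ∀ k : ℕ, 1 - z * (q : ℂ) ^ (k + 1) ≠ 0) :
    Multipliable (fun k : ℕ => 1 - z * (q:ℂ)^(k+1)) := by
  have hsum : Summable (fun n : ℕ => Complex.log (1 - z * (q:ℂ)^(n+1))) := by
    apply Summable.of_norm_bounded_eventually (g := fun n => (3/2) * (‖z‖ * (q*q^n)))
    · exact (((summable_geometric_of_lt_one hq0.le hq1).mul_left q).mul_left ‖z‖).mul_left (3/2)
    · rw [Nat.cofinite_eq_atTop]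
      have htend : Tendsto (fun n : ℕ => ‖z * (q:ℂ)^(n+1)‖) atTop (𝓝 0) := by
        have hq : ‖(q:ℂ)‖ < 1 := by
          rw [Complex.norm_real, Real.norm_eq_abs, abs_of_pos hq0]; exact hq1
        have h0 : Tendsto (fun n : ℕ => z*((q:ℂ)*(q:ℂ)^n)) atTop (𝓝 0) := by
          have := ((tendsto_pow_atTop_nhds_zero_of_norm_lt_one hq).const_mul (q:ℂ)).const_mul z
          simpa using this
        have := h0.norm
        rw [norm_zero] at this
        apply this.congr
        intro n
        rw [pow_succ]
        ring_nf
      have hev : ∀ᶠ n : ℕ in atTop, ‖z * (q:ℂ)^(n+1)‖ ≤ 1/2 :=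
        htend.eventually (eventually_le_nhds (by norm_num))
      filter_upwards [hev] with n hn
      have heq : (1:ℂ) - z * (q:ℂ)^(n+1) = 1 + (-(z * (q:ℂ)^(n+1))) := by ring
      rw [heq]
      have := Complex.norm_log_one_add_half_le_self (z := -(z * (q:ℂ)^(n+1))) (by
        rw [norm_neg]; exact hn)
      calc ‖Complex.log (1 + -(z * (q:ℂ)^(n+1)))‖ ≤ 3/2 * ‖-(z * (q:ℂ)^(n+1))‖ := this
        _ = 3/2 * (‖z‖ * (q*q^n)) := by
            rw [norm_neg, norm_mul, norm_pow, Complex.norm_real, Real.norm_eq_abs,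
                abs_of_pos hq0, pow_succ]
            ring
  exact Complex.multipliable_of_summable_log hsum

theorem cauchy_identity (q : ℝ) (hq0 : 0 < q) (hq1 : q < 1) (z : ℂ)
    (hz : ‖z‖ < 1 / q) (hpole : ∀ k : ℕ, 1 - z * (q : ℂ) ^ (k + 1) ≠ 0) :
    ∑' n : ℕ, (q : ℂ) ^ (n ^ 2) * z ^ n /
        (qPoch (q : ℂ) (q : ℂ) n * qPoch ((q : ℂ) * z) (q : ℂ) n) =
      (∏' k : ℕ, (1 - z * (q : ℂ) ^ (k + 1)))⁻¹ := by
  have hr : ‖z‖ * q < 1 := (lt_div_iff₀ hq0).mp hz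
  set r := ‖z‖ with hrdef
  have hr0 : (0:ℝ) ≤ r := norm_nonneg z
  have hd : (0:ℝ) < 1 - q := by linarith
  have hc : (0:ℝ) < 1 - q*r := by nlinarith
  set f : ℕ → ℕ → ℂ := fun N k =>
    if k < N+1 then Bq q N k * (q:ℂ)^(k^2) * z^k / qPoch ((q:ℂ)*z) (q:ℂ) k else 0 with hf
  set g : ℕ → ℂ := fun k =>
    (q:ℂ)^(k^2) * z^k / (qPoch (q:ℂ) (q:ℂ) k * qPoch ((q:ℂ)*z) (q:ℂ) k) with hg
  set bound : ℕ → ℝ := fun k => q^(k^2) * (r / ((1-q)*(1-q*r)))^k with hbound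
  set M := r / ((1-q)*(1-q*r)) with hM
  have hM0 : 0 ≤ M := by positivity
  -- summability of the bound
  have hsummable : Summable bound := by
    have htd : Tendsto (fun k : ℕ => q^k * M) atTop (𝓝 0) := by
      have := (tendsto_pow_atTop_nhds_zero_of_lt_one hq0.le hq1).mul_const M
      simpa using this
    have hev : ∀ᶠ k : ℕ in atTop, q^k * M ≤ 1/2 :=
      htd.eventually (eventually_le_nhds (by norm_num))
    apply Summable.of_norm_bounded_eventually (g := fun k => (1/2:ℝ)^k)
      (summable_geometric_of_lt_one (by norm_num) (by norm_num))
    rw [Nat.cofinite_eq_atTop]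
    filter_upwards [hev] with k hk
    rw [Real.norm_eq_abs, abs_of_nonneg (by positivity)]
    calc q^(k^2) * M^k = (q^k * M)^k := by
          rw [mul_pow, ← pow_mul, pow_two]
      _ ≤ (1/2)^k := by
          apply pow_le_pow_left₀ (by positivity) hk
  -- norm bound
  have h_bound : ∀ N k, ‖f N k‖ ≤ bound k := by
    intro N k
    by_cases hk : k < N+1
    · simp only [hf, if_pos hk]
      rw [norm_div, norm_mul, norm_mul, norm_pow, norm_pow, Complex.norm_real,
          Real.norm_eq_abs, abs_of_pos hq0]
      have hnum : ‖Bq q N k‖ * q^(k^2) * r^k ≤ ((1-q)⁻¹)^k * q^(k^2) * r^k := by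
        have := norm_Bq_le q hq0 hq1 N k (by omega)
        have h1 : (0:ℝ) ≤ q^(k^2) * r^k := by positivity
        nlinarith [pow_nonneg hr0 k, pow_nonneg hq0.le (k^2), norm_nonneg (Bq q N k)]
      have hden := norm_qz_ge q hq0 hq1 z hr k
      calc ‖Bq q N k‖ * q^(k^2) * r^k / ‖qPoch ((q:ℂ)*z) (q:ℂ) k‖
          ≤ ((1-q)⁻¹)^k * q^(k^2) * r^k / (1 - q*r)^k := by
            apply div_le_div₀ (by positivity) hnum (by positivity) hden
        _ = bound k := by
            simp only [hbound, hM]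
            rw [div_pow, mul_pow]
            field_simp
            rw [mul_right_comm, ← mul_pow, one_div, inv_mul_cancel₀ hd.ne', one_pow, one_mul]
    · simp only [hf, if_neg hk, norm_zero]
      positivity
  -- pointwise limits
  have hab : ∀ k, Tendsto (fun N => f N k) atTop (𝓝 (g k)) := by
    intro k
    have hPk := qq_ne_zero q hq0 hq1 k
    have h1 := ((Bq_tendsto q hq0 hq1 k).mul_const ((q:ℂ)^(k^2))).mul_const (z^k)
    have h2 := h1.div_const (qPoch ((q:ℂ)*z) (q:ℂ) k)
    have h3 : (1 / qPoch (q:ℂ) (q:ℂ) k * (q:ℂ)^(k^2) * z^k) / qPoch ((q:ℂ)*z) (q:ℂ) k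
        = g k := by
      simp only [hg]
      field_simp
    rw [h3] at h2
    apply h2.congr'
    filter_upwards [eventually_ge_atTop k] with N hN
    simp only [hf, if_pos (by omega : k < N+1)]
  -- dominated convergence
  have hS : Tendsto (fun N => ∑' k, f N k) atTop (𝓝 (∑' k, g k)) :=
    tendsto_tsum_of_dominated_convergence hsummable hab
      (Eventually.of_forall (fun N => h_bound N))
  -- tsum of f N is the finite sum
  have hA : ∀ N, (∑' k, f N k) =
      ∑ n ∈ Finset.range (N+1), Bq q N n * (q:ℂ)^(n^2) * z^n / qPoch ((q:ℂ)*z) (q:ℂ) n := by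
    intro N
    rw [tsum_eq_sum (s := Finset.range (N+1))]
    · exact Finset.sum_congr rfl fun n hn => by
        rw [Finset.mem_range] at hn
        simp only [hf, if_pos hn]
    · intro b hb
      rw [Finset.mem_range] at hb
      simp only [hf, if_neg hb]
  -- product convergence
  have hmul := multipliable_fact q hq0 hq1 z hpole
  have hProd : Tendsto (fun N => qPoch ((q:ℂ)*z) (q:ℂ) N) atTop
      (𝓝 (∏' k : ℕ, (1 - z * (q:ℂ)^(k+1)))) := by
    have := hmul.hasProd.tendsto_prod_nat
    apply this.congr
    intro N
    unfold qPoch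
    refine Finset.prod_congr rfl fun j _ => ?_
    rw [pow_succ]
    ring
  -- combine
  have hcomb := hS.mul hProd
  have hone : (fun N => (∑' k, f N k) * qPoch ((q:ℂ)*z) (q:ℂ) N) = fun _ => (1:ℂ) := by
    funext N
    rw [hA N]
    exact AP q hq0 hq1 z hpole N
  rw [hone] at hcomb
  have hSP : (∑' k, g k) * (∏' k : ℕ, (1 - z * (q:ℂ)^(k+1))) = 1 :=
    tendsto_nhds_unique hcomb tendsto_const_nhds
  exact eq_inv_of_mul_eq_one_left hSP
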